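/- There is no monic real polynomial of degree 4 with coefficient sign pattern (+,+,-,+,+) (all coefficients nonzero) having exactly 2 positive roots and 0 negative roots counted with multiplicity. -/

import Mathlib

open Polynomial

/-- Number of positive real roots counted with multiplicity. -/
noncomputable def posRoots (p : Polynomial ℝ) : ℕ :=
  (p.roots.filter (fun x => 0 < x)).card

/-- Number of negative real roots counted with multiplicity. -/
noncomputable def negRoots (p : Polynomial ℝ) : ℕ :=
  (p.roots.filter (fun x => x < 0)).card

theorem grabiner_nonrealizable_deg4_plus (p : Polynomial ℝ)
    (hm : p.Monic) (hd : p.natDegree = 4)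
    (h3 : 0 < p.coeff 3) (h2 : p.coeff 2 < 0) (h1 : 0 < p.coeff 1)
    (h0 : 0 < p.coeff 0) :
    ¬ (posRoots p = 2 ∧ negRoots p = 0) := by
  rintro ⟨hpos, hneg⟩
  unfold posRoots at hpos
  unfold negRoots at hneg
  have hp0 : p ≠ 0 := hm.ne_zero
  have hnegz : p.roots.filter (fun x => x < 0) = 0 := Multiset.card_eq_zero.1 hneg
  have hallpos : ∀ x ∈ p.roots, 0 < x := by
    intro x hx
    rcases lt_trichotomy x 0 with h | h | h
    · exact absurd (hnegz ▸ Multiset.mem_filter.2 ⟨hx, h⟩) (Multiset.notMem_zero x)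
    · exfalso
      subst h
      have : p.IsRoot 0 := isRoot_of_mem_roots hx
      rw [IsRoot, ← coeff_zero_eq_eval_zero] at this
      linarith
    · exact h
  have hfilt : p.roots.filter (fun x => 0 < x) = p.roots :=
    Multiset.filter_eq_self.2 hallpos
  have hcard : p.roots.card = 2 := by rw [← hfilt]; exact hpos
  obtain ⟨r, s, hrs⟩ := Multiset.card_eq_two.1 hcard
  have hr : 0 < r := hallpos r (by rw [hrs]; simp)
  have hs : 0 < s := hallpos s (by rw [hrs]; simp)
  -- factorization
  obtain ⟨q, hq⟩ := p.prod_multiset_X_sub_C_dvd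
  rw [hrs] at hq
  simp only [Multiset.insert_eq_cons, Multiset.map_cons, Multiset.map_singleton,
    Multiset.prod_cons, Multiset.prod_singleton] at hq
  have hq0 : q ≠ 0 := by rintro rfl; rw [mul_zero] at hq; exact hp0 hq
  have hdm : ((X - C r) * (X - C s)).Monic := (monic_X_sub_C r).mul (monic_X_sub_C s)
  have hqm : q.Monic := hdm.of_mul_monic_left (hq ▸ hm)
  have hqd : q.natDegree = 2 := by
    have h4 := hq ▸ hd
    rw [natDegree_mul (hdm.ne_zero) hq0,
      natDegree_mul (X_sub_C_ne_zero r) (X_sub_C_ne_zero s)] at h4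
    simp [natDegree_X_sub_C] at h4
    omega
  -- q has no real roots
  have hqroots : q.roots = 0 := by
    have hA : p.roots = ((X - C r) * (X - C s)).roots + q.roots := by
      rw [hq, roots_mul (hq ▸ hp0)]
    have hB : ((X - C r) * (X - C s)).roots = {r, s} := by
      rw [roots_mul (hdm.ne_zero), roots_X_sub_C, roots_X_sub_C]; rfl
    rw [hB, hrs] at hA
    have := congrArg Multiset.card hA
    simp at this
    exact this
  have hnoroot : ∀ x : ℝ, q.eval x ≠ 0 := by
    intro x hx
    have : x ∈ q.roots := by rw [mem_roots hq0]; exact hx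
    rw [hqroots] at this
    exact Multiset.notMem_zero x this
  -- representation of q
  set b := q.coeff 1 with hb
  set c := q.coeff 0 with hc
  have hqrep : q = X^2 + C b * X + C c := by
    ext n
    rcases n with _|_|_|n
    · simp [hc]
    · simp [coeff_X_pow, coeff_C, hb]
    · simpa [coeff_X_pow, coeff_C] using (hqd ▸ hqm.coeff_natDegree)
    · rw [q.coeff_eq_zero_of_natDegree_lt (by omega)]
      simp [coeff_X_pow, coeff_C]
  have heval : ∀ x : ℝ, q.eval x = x^2 + b*x + c := by
    intro x; rw [hqrep]; simp
  -- discriminant negative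
  have hdisc : b^2 < 4*c := by
    by_contra h
    push_neg at h
    set d := Real.sqrt (b^2 - 4*c) with hdd
    have hd2 : d^2 = b^2 - 4*c := Real.sq_sqrt (by linarith)
    apply hnoroot ((-b + d)/2)
    rw [heval]
    nlinarith [hd2]
  -- expand p
  have hexp : p = X^4 + C (b - r - s) * X^3 + C (c + r*s - b*r - b*s) * X^2
      + C (b*r*s - c*r - c*s) * X + C (c*r*s) := by
    rw [hq, hqrep]
    simp only [map_sub, map_add, map_mul]
    ring
  have hc3 : p.coeff 3 = b - r - s := by
    rw [hexp]
    simp only [coeff_add, coeff_C_mul, coeff_X_pow, coeff_X, coeff_C]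
    norm_num
  have hc1 : p.coeff 1 = b*r*s - c*r - c*s := by
    rw [hexp]
    simp only [coeff_add, coeff_C_mul, coeff_X_pow, coeff_X, coeff_C]
    norm_num
  rw [hc3] at h3
  rw [hc1] at h1
  -- final contradiction
  have hc0 : 0 < c := by nlinarith [heval 0, hnoroot 0, sq_nonneg b]
  nlinarith [sq_nonneg (r - s), mul_pos hr hs, mul_pos (mul_pos hr hs) hr,
    sq_nonneg (b*r*s - c*(r+s)), mul_pos h3 (mul_pos hr hs),
    mul_pos h1 h1, mul_pos hc0 (mul_pos hr hs)]
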